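/- Let X and Y be Banach spaces, and let γ and τ be operator ideal norms on the ideal F of finite-rank operators. Suppose that: (i) A(X) has a bounded approximate identity of bound λ; (ii) the multiplication map π : A(Y,X) ⊗̂ A(X,Y) → A(X) is surjective with inversion constant β; (iii) γ and τ are equivalent on one of F(Y,X) or F(X,Y), say cγ ≤ τ ≤ Cγ. Then γ and τ are equivalent on F(X); specifically, cβ^{-2}λ^{-2}γ ≤ τ ≤ Cβ^{2}λ^{2}γ on F(X). -/

import Mathlib

open Filter Topology
open scoped TensorProduct ENNReal

noncomputable section

/-- A continuous linear map has finite rank. -/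
def IsFinRank {X Y : Type*} [NormedAddCommGroup X] [NormedSpace ℂ X]
    [NormedAddCommGroup Y] [NormedSpace ℂ Y] (T : X →L[ℂ] Y) : Prop :=
  ∃ s : Submodule ℂ Y, FiniteDimensional ℂ s ∧ LinearMap.range (T : X →ₗ[ℂ] Y) ≤ s

/-- `T` is approximable: an operator-norm limit of finite-rank operators. -/
def IsApprox {X Y : Type*} [NormedAddCommGroup X] [NormedSpace ℂ X]
    [NormedAddCommGroup Y] [NormedSpace ℂ Y] (T : X →L[ℂ] Y) : Prop :=
  T ∈ closure {S : X →L[ℂ] Y | IsFinRank S}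

/-- The linearization of composition on the algebraic tensor product. -/
def tComp {X Y Z : Type*} [NormedAddCommGroup X] [NormedSpace ℂ X]
    [NormedAddCommGroup Y] [NormedSpace ℂ Y] [NormedAddCommGroup Z] [NormedSpace ℂ Z] :
    ((Y →L[ℂ] Z) ⊗[ℂ] (X →L[ℂ] Y)) →ₗ[ℂ] (X →L[ℂ] Z) :=
  TensorProduct.lift ((ContinuousLinearMap.coeLM ℂ).comp
    (ContinuousLinearMap.compL ℂ X Y Z).toLinearMap)

/-- Post-composition by `A` as a linear map between operator spaces. -/
def postT {X Y Z : Type*} [NormedAddCommGroup X] [NormedSpace ℂ X]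
    [NormedAddCommGroup Y] [NormedSpace ℂ Y] [NormedAddCommGroup Z] [NormedSpace ℂ Z]
    (A : Y →L[ℂ] Z) : (X →L[ℂ] Y) →ₗ[ℂ] (X →L[ℂ] Z) :=
  (ContinuousLinearMap.compL ℂ X Y Z A).toLinearMap

/-- Pre-composition by `A` as a linear map between operator spaces. -/
def preT {X Y Z : Type*} [NormedAddCommGroup X] [NormedSpace ℂ X]
    [NormedAddCommGroup Y] [NormedSpace ℂ Y] [NormedAddCommGroup Z] [NormedSpace ℂ Z]
    (A : X →L[ℂ] Y) : (Y →L[ℂ] Z) →ₗ[ℂ] (X →L[ℂ] Z) :=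
  ((ContinuousLinearMap.compL ℂ X Y Z).flip A).toLinearMap

/-- `t` admits a finite representation by elementary tensors with factors in `SE`, `SF`. -/
def HasRepIn {E F : Type*} [NormedAddCommGroup E] [NormedSpace ℂ E]
    [NormedAddCommGroup F] [NormedSpace ℂ F] (SE : Set E) (SF : Set F) (t : E ⊗[ℂ] F) : Prop :=
  ∃ l : List (E × F), (∀ p ∈ l, p.1 ∈ SE ∧ p.2 ∈ SF) ∧
    (l.map fun p => p.1 ⊗ₜ[ℂ] p.2).sum = t

/-- The projective tensor norm of `t`, computed over representations with factors in
`SE`, `SF` (i.e. the projective norm of the corresponding tensor product of subspaces). -/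
def projNormOn {E F : Type*} [NormedAddCommGroup E] [NormedSpace ℂ E]
    [NormedAddCommGroup F] [NormedSpace ℂ F] (SE : Set E) (SF : Set F) (t : E ⊗[ℂ] F) : ℝ :=
  sInf {c | ∃ l : List (E × F), (∀ p ∈ l, p.1 ∈ SE ∧ p.2 ∈ SF) ∧
    (l.map fun p => p.1 ⊗ₜ[ℂ] p.2).sum = t ∧ (l.map fun p => ‖p.1‖ * ‖p.2‖).sum = c}

/-- The projective tensor norm. -/
def projNorm {E F : Type*} [NormedAddCommGroup E] [NormedSpace ℂ E]
    [NormedAddCommGroup F] [NormedSpace ℂ F] (t : E ⊗[ℂ] F) : ℝ :=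
  projNormOn Set.univ Set.univ t

/-- `Δ ∈ F(Y,X) ⊗ F(X,Y)` is a generalized diagonal for the algebra `A ⊆ B(X)`:
`W Δ = Δ W` and `π(Δ) W = W` for all `W ∈ A`. -/
def IsGenDiag {X Y : Type*} [NormedAddCommGroup X] [NormedSpace ℂ X]
    [NormedAddCommGroup Y] [NormedSpace ℂ Y] (A : Set (X →L[ℂ] X))
    (Δ : (Y →L[ℂ] X) ⊗[ℂ] (X →L[ℂ] Y)) : Prop :=
  (∀ W ∈ A, TensorProduct.map (postT W) LinearMap.id Δ =
      TensorProduct.map LinearMap.id (preT W) Δ) ∧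
  (∀ W ∈ A, (tComp Δ).comp W = W)

/-- `d` is an approximate diagonal of bound `K`, along the filter `Fl`, for the algebra
of operators `A ⊆ B(V)`: a bounded net in `A ⊗̂ A` with `π(d_i) a → a` and
`a·d_i − d_i·a → 0` (in projective norm) for every `a ∈ A`. -/
def IsApproxDiagFor {V : Type*} [NormedAddCommGroup V] [NormedSpace ℂ V]
    (A : Set (V →L[ℂ] V)) {ι : Type*} (Fl : Filter ι)
    (d : ι → (V →L[ℂ] V) ⊗[ℂ] (V →L[ℂ] V)) (K : ℝ) : Prop :=
  (∀ i, HasRepIn A A (d i) ∧ projNormOn A A (d i) ≤ K) ∧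
  (∀ a ∈ A, Tendsto (fun i => (tComp (d i)).comp a) Fl (𝓝 a)) ∧
  (∀ a ∈ A, Tendsto (fun i =>
      projNormOn A A (TensorProduct.map (postT a) LinearMap.id (d i)
        - TensorProduct.map LinearMap.id (preT a) (d i))) Fl (𝓝 (0 : ℝ)))

/-- The (not necessarily unital) operator algebra `A ⊆ B(V)` has an approximate diagonal of
bound `K`; for `A` the algebra of approximable operators this says that `A(V)` is
`K`-amenable. -/
def AmenableSetConst {V : Type*} [NormedAddCommGroup V] [NormedSpace ℂ V]
    (A : Set (V →L[ℂ] V)) (K : ℝ) : Prop :=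
  ∃ (ι : Type) (Fl : Filter ι) (d : ι → (V →L[ℂ] V) ⊗[ℂ] (V →L[ℂ] V)),
    Fl.NeBot ∧ IsApproxDiagFor A Fl d K

/-- The operator algebra `A ⊆ B(V)` is amenable (has some bounded approximate diagonal). -/
def AmenableSet {V : Type*} [NormedAddCommGroup V] [NormedSpace ℂ V]
    (A : Set (V →L[ℂ] V)) : Prop :=
  ∃ K : ℝ, AmenableSetConst A K

/-- The algebra `A(V)` of approximable operators on `V` is `K`-amenable. -/
def AmenableConst (V : Type*) [NormedAddCommGroup V] [NormedSpace ℂ V] (K : ℝ) : Prop :=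
  AmenableSetConst {T : V →L[ℂ] V | IsApprox T} K

/-- The algebra `A(V)` of approximable operators on `V` is amenable. -/
def AmenableA (V : Type*) [NormedAddCommGroup V] [NormedSpace ℂ V] : Prop :=
  ∃ K : ℝ, AmenableConst V K

/-- The Banach–Mazur distance (valued in `ℝ≥0∞`; `⊤` if the spaces are not isomorphic). -/
def BMdist (E F : Type*) [NormedAddCommGroup E] [NormedSpace ℂ E]
    [NormedAddCommGroup F] [NormedSpace ℂ F] : ℝ≥0∞ :=
  ⨅ T : E ≃L[ℂ] F, ENNReal.ofReal (‖(T : E →L[ℂ] F)‖ * ‖(T.symm : F →L[ℂ] E)‖)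


/-- An operator ideal norm on the operator ideal `F` of finite-rank operators
(between complex normed spaces in a fixed universe). -/
structure OpIdealNorm where
  gamma : ∀ (E F : Type u) [NormedAddCommGroup E] [NormedSpace ℂ E]
    [NormedAddCommGroup F] [NormedSpace ℂ F], (E →L[ℂ] F) → ℝ
  gamma_nonneg : ∀ (E F : Type u) [NormedAddCommGroup E] [NormedSpace ℂ E]
    [NormedAddCommGroup F] [NormedSpace ℂ F] (T : E →L[ℂ] F), 0 ≤ gamma E F T
  gamma_add_le : ∀ (E F : Type u) [NormedAddCommGroup E] [NormedSpace ℂ E]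
    [NormedAddCommGroup F] [NormedSpace ℂ F] (S T : E →L[ℂ] F),
    IsFinRank S → IsFinRank T → gamma E F (S + T) ≤ gamma E F S + gamma E F T
  gamma_smul : ∀ (E F : Type u) [NormedAddCommGroup E] [NormedSpace ℂ E]
    [NormedAddCommGroup F] [NormedSpace ℂ F] (a : ℂ) (T : E →L[ℂ] F),
    IsFinRank T → gamma E F (a • T) = ‖a‖ * gamma E F T
  gamma_def : ∀ (E F : Type u) [NormedAddCommGroup E] [NormedSpace ℂ E]
    [NormedAddCommGroup F] [NormedSpace ℂ F] (T : E →L[ℂ] F),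
    IsFinRank T → gamma E F T = 0 → T = 0
  gamma_id : gamma (ULift ℂ) (ULift ℂ) (ContinuousLinearMap.id ℂ (ULift ℂ)) = 1
  gamma_comp : ∀ (E F E₀ F₀ : Type u) [NormedAddCommGroup E] [NormedSpace ℂ E]
    [NormedAddCommGroup F] [NormedSpace ℂ F] [NormedAddCommGroup E₀] [NormedSpace ℂ E₀]
    [NormedAddCommGroup F₀] [NormedSpace ℂ F₀]
    (A : F →L[ℂ] F₀) (T : E →L[ℂ] F) (B : E₀ →L[ℂ] E), IsFinRank T →
    gamma E₀ F₀ ((A.comp T).comp B) ≤ ‖A‖ * gamma E F T * ‖B‖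

/-- `A(V)` has a bounded approximate identity of bound `lam`. -/
def HasBAIof (V : Type*) [NormedAddCommGroup V] [NormedSpace ℂ V] (lam : ℝ) : Prop :=
  ∃ (ι : Type) (Fl : Filter ι) (eA : ι → V →L[ℂ] V), Fl.NeBot ∧
    (∀ i, IsApprox (eA i) ∧ ‖eA i‖ ≤ lam) ∧
    (∀ a : V →L[ℂ] V, IsApprox a → Tendsto (fun i => (eA i).comp a) Fl (𝓝 a) ∧
      Tendsto (fun i => a.comp (eA i)) Fl (𝓝 a))

/-- The multiplication map `π : A(Y,X) ⊗̂ A(X,Y) → A(X)` is surjective with inversion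
constant at most `β`: every approximable `T` on `X` is an absolutely convergent sum
`∑ Rᵢ Sᵢ` with `Rᵢ ∈ A(Y,X)`, `Sᵢ ∈ A(X,Y)` and `∑ ‖Rᵢ‖‖Sᵢ‖ ≤ β‖T‖ + ε`. -/
def MulSurjInv (Y X : Type*) [NormedAddCommGroup X] [NormedSpace ℂ X]
    [NormedAddCommGroup Y] [NormedSpace ℂ Y] (β : ℝ) : Prop :=
  ∀ T : X →L[ℂ] X, IsApprox T → ∀ ε > (0 : ℝ),
    ∃ (R : ℕ → Y →L[ℂ] X) (S : ℕ → X →L[ℂ] Y),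
      (∀ i, IsApprox (R i) ∧ IsApprox (S i)) ∧
      Summable (fun i => ‖R i‖ * ‖S i‖) ∧
      (∑' i, ‖R i‖ * ‖S i‖) ≤ β * ‖T‖ + ε ∧
      HasSum (fun i => (R i).comp (S i)) T


section AuxLemmas

universe u

variable {E F G : Type u} [NormedAddCommGroup E] [NormedSpace ℂ E]
  [NormedAddCommGroup F] [NormedSpace ℂ F] [NormedAddCommGroup G] [NormedSpace ℂ G]

lemma isFinRank_zero : IsFinRank (0 : E →L[ℂ] F) :=
  ⟨⊥, inferInstance, by simp⟩

lemma IsFinRank.isApprox {T : E →L[ℂ] F} (h : IsFinRank T) : IsApprox T :=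
  subset_closure h

lemma IsFinRank.comp_right {M : E →L[ℂ] F} (h : IsFinRank M) (B : G →L[ℂ] E) :
    IsFinRank (M ∘L B) := by
  obtain ⟨s, hs, hr⟩ := h
  exact ⟨s, hs, by rintro y ⟨x, rfl⟩; exact hr ⟨B x, rfl⟩⟩

lemma IsFinRank.comp_left {M : E →L[ℂ] F} (h : IsFinRank M) (A : F →L[ℂ] G) :
    IsFinRank (A ∘L M) := by
  obtain ⟨s, hs, hr⟩ := h
  refine ⟨s.map (A : F →ₗ[ℂ] G), inferInstance, ?_⟩
  rintro y ⟨x, rfl⟩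
  exact ⟨M x, hr ⟨x, rfl⟩, rfl⟩

lemma IsFinRank.add {M N : E →L[ℂ] F} (hM : IsFinRank M) (hN : IsFinRank N) :
    IsFinRank (M + N) := by
  obtain ⟨s, hs, hrs⟩ := hM
  obtain ⟨t, ht, hrt⟩ := hN
  refine ⟨s ⊔ t, inferInstance, ?_⟩
  rintro y ⟨x, rfl⟩
  exact Submodule.add_mem _ (Submodule.mem_sup_left (hrs ⟨x, rfl⟩))
    (Submodule.mem_sup_right (hrt ⟨x, rfl⟩))

lemma IsFinRank.neg {M : E →L[ℂ] F} (hM : IsFinRank M) : IsFinRank (-M) := by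
  obtain ⟨s, hs, hrs⟩ := hM
  exact ⟨s, hs, by rintro y ⟨x, rfl⟩; exact Submodule.neg_mem _ (hrs ⟨x, rfl⟩)⟩

lemma IsFinRank.sub {M N : E →L[ℂ] F} (hM : IsFinRank M) (hN : IsFinRank N) :
    IsFinRank (M - N) := by
  rw [sub_eq_add_neg]; exact hM.add hN.neg

lemma isFinRank_smulRight (f : E →L[ℂ] ℂ) (v : F) : IsFinRank (f.smulRight v) := by
  refine ⟨Submodule.span ℂ {v}, inferInstance, ?_⟩
  rintro y ⟨x, rfl⟩
  exact Submodule.smul_mem _ _ (Submodule.mem_span_singleton_self v)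

lemma isFinRank_sum {ι : Type*} (s : Finset ι) (g : ι → E →L[ℂ] F)
    (h : ∀ i ∈ s, IsFinRank (g i)) : IsFinRank (∑ i ∈ s, g i) := by
  classical
  induction s using Finset.induction_on with
  | empty => simpa using isFinRank_zero
  | @insert _ _ hx ih =>
    rw [Finset.sum_insert hx]
    exact (h _ (Finset.mem_insert_self _ _)).add
      (ih fun i hi => h i (Finset.mem_insert_of_mem hi))

lemma exists_decomp (T : E →L[ℂ] F) (hT : IsFinRank T) :
    ∃ (n : ℕ) (f : Fin n → (E →L[ℂ] ℂ)) (v : Fin n → F),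
      T = ∑ k, (f k).smulRight (v k) := by
  obtain ⟨s, hfd, hr⟩ := hT
  let T' : E →L[ℂ] s := T.codRestrict s (fun x => hr ⟨x, rfl⟩)
  let b := Module.finBasis ℂ s
  refine ⟨_, fun k => (LinearMap.toContinuousLinearMap (b.coord k)) ∘L T',
    fun k => (b k : F), ?_⟩
  ext x
  have h1 : ∑ k, (b.repr (T' x)) k • b k = T' x := b.sum_repr (T' x)
  have h2 : ((∑ k, (b.repr (T' x)) k • b k : s) : F) = ((T' x : s) : F) := by rw [h1]
  push_cast at h2
  simp only [ContinuousLinearMap.sum_apply, ContinuousLinearMap.smulRight_apply,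
    ContinuousLinearMap.comp_apply, LinearMap.coe_toContinuousLinearMap', Module.Basis.coord_apply]
  rw [h2]
  rfl

lemma mul_div_add_one_le {a b : ℝ} (ha : 0 ≤ a) (hb : 0 < b) : a * (b / (a + 1)) ≤ b := by
  rw [← mul_div_assoc, div_le_iff₀ (by linarith : (0:ℝ) < a + 1)]
  nlinarith

namespace OpIdealNorm

variable (γ : OpIdealNorm.{u})

lemma gamma_zero : γ.gamma E F 0 = 0 := by
  have := γ.gamma_smul E F 0 0 isFinRank_zero
  simpa using this

lemma gamma_neg {M : E →L[ℂ] F} (hM : IsFinRank M) :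
    γ.gamma E F (-M) = γ.gamma E F M := by
  have := γ.gamma_smul E F (-1) M hM
  simpa using this

lemma gamma_comp_left (A : F →L[ℂ] G) {M : E →L[ℂ] F} (hM : IsFinRank M) :
    γ.gamma E G (A ∘L M) ≤ ‖A‖ * γ.gamma E F M := by
  have h := γ.gamma_comp E F E G A M (ContinuousLinearMap.id ℂ E) hM
  rw [ContinuousLinearMap.comp_id] at h
  refine h.trans ?_
  calc ‖A‖ * γ.gamma E F M * ‖ContinuousLinearMap.id ℂ E‖
      ≤ ‖A‖ * γ.gamma E F M * 1 := by
        refine mul_le_mul_of_nonneg_left ContinuousLinearMap.norm_id_le ?_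
        exact mul_nonneg (norm_nonneg _) (γ.gamma_nonneg _ _ _)
    _ = ‖A‖ * γ.gamma E F M := mul_one _

lemma gamma_comp_right {M : E →L[ℂ] F} (hM : IsFinRank M) (B : G →L[ℂ] E) :
    γ.gamma G F (M ∘L B) ≤ γ.gamma E F M * ‖B‖ := by
  have h := γ.gamma_comp E F G F (ContinuousLinearMap.id ℂ F) M B hM
  rw [ContinuousLinearMap.id_comp] at h
  refine h.trans ?_
  have h1 : ‖ContinuousLinearMap.id ℂ F‖ * γ.gamma E F M ≤ 1 * γ.gamma E F M :=
    mul_le_mul_of_nonneg_right ContinuousLinearMap.norm_id_le (γ.gamma_nonneg _ _ _)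
  rw [one_mul] at h1
  exact mul_le_mul_of_nonneg_right h1 (norm_nonneg _)

lemma gamma_sum_le {ι : Type*} (s : Finset ι) (g : ι → E →L[ℂ] F)
    (hg : ∀ i ∈ s, IsFinRank (g i)) :
    γ.gamma E F (∑ i ∈ s, g i) ≤ ∑ i ∈ s, γ.gamma E F (g i) := by
  classical
  induction s using Finset.induction_on with
  | empty => simp [γ.gamma_zero]
  | @insert a t ha ih =>
    rw [Finset.sum_insert ha, Finset.sum_insert ha]
    refine (γ.gamma_add_le E F _ _ (hg _ (Finset.mem_insert_self _ _))
      (isFinRank_sum t g fun i hi => hg i (Finset.mem_insert_of_mem hi))).trans ?_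
    exact add_le_add_right (ih fun i hi => hg i (Finset.mem_insert_of_mem hi)) _

lemma gamma_smulRight (f : E →L[ℂ] ℂ) (v : F) :
    γ.gamma E F (f.smulRight v) ≤ ‖f‖ * ‖v‖ := by
  set uE : ULift.{u} ℂ ≃L[ℂ] ℂ := ContinuousLinearEquiv.ulift with huE
  set uDown : ULift.{u} ℂ →L[ℂ] ℂ := uE.toContinuousLinearMap with huD
  set uUp : ℂ →L[ℂ] ULift.{u} ℂ := uE.symm.toContinuousLinearMap with huU
  have huDapp : ∀ x : ULift.{u} ℂ, uDown x = x.down := fun x => rfl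
  have huUapp : ∀ x : ℂ, uUp x = ULift.up x := fun x => rfl
  have hDn : ‖uDown‖ ≤ 1 := by
    refine ContinuousLinearMap.opNorm_le_bound _ zero_le_one fun x => ?_
    rw [one_mul, huDapp, ULift.norm_def]
  have hUn : ‖uUp‖ ≤ 1 := by
    refine ContinuousLinearMap.opNorm_le_bound _ zero_le_one fun x => ?_
    rw [one_mul, huUapp, ULift.norm_def]
  set A : ULift.{u} ℂ →L[ℂ] F := uDown.smulRight v with hA
  set B : E →L[ℂ] ULift.{u} ℂ := uUp ∘L f with hB
  have hid : IsFinRank (ContinuousLinearMap.id ℂ (ULift.{u} ℂ)) :=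
    ⟨⊤, inferInstance, le_top⟩
  have hfact : (A ∘L (ContinuousLinearMap.id ℂ (ULift.{u} ℂ))) ∘L B = f.smulRight v := by
    ext x
    show A (ContinuousLinearMap.id ℂ (ULift.{u} ℂ) (B x)) = f x • v
    rw [ContinuousLinearMap.id_apply]
    show uDown (uUp (f x)) • v = f x • v
    rw [huDapp, huUapp]
  have h := γ.gamma_comp _ _ E F A (ContinuousLinearMap.id ℂ (ULift.{u} ℂ)) B hid
  rw [hfact, γ.gamma_id, mul_one] at h
  refine h.trans ?_
  have hAn : ‖A‖ ≤ ‖v‖ := by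
    rw [hA, ContinuousLinearMap.norm_smulRight_apply]
    calc ‖uDown‖ * ‖v‖ ≤ 1 * ‖v‖ := mul_le_mul_of_nonneg_right hDn (norm_nonneg _)
      _ = ‖v‖ := one_mul _
  have hBn : ‖B‖ ≤ ‖f‖ := by
    refine (ContinuousLinearMap.opNorm_comp_le _ _).trans ?_
    calc ‖uUp‖ * ‖f‖ ≤ 1 * ‖f‖ := mul_le_mul_of_nonneg_right hUn (norm_nonneg _)
      _ = ‖f‖ := one_mul _
  exact (mul_le_mul hAn hBn (norm_nonneg _) (norm_nonneg _)).trans_eq (mul_comm _ _)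

end OpIdealNorm

section BAI

variable {X : Type u} [NormedAddCommGroup X] [NormedSpace ℂ X]

lemma bai_left (τ : OpIdealNorm.{u}) {lam : ℝ} (h1 : HasBAIof X lam)
    (T : X →L[ℂ] X) (hT : IsFinRank T) {x₀ : X} (hx₀ : T x₀ ≠ 0)
    {ε : ℝ} (hε : 0 < ε) :
    ∃ e : X →L[ℂ] X, IsApprox e ∧ ‖e‖ ≤ lam ∧ τ.gamma X X (e ∘L T - T) ≤ ε := by
  obtain ⟨n, f, v, hTd⟩ := exists_decomp T hT
  obtain ⟨g, hg1, -⟩ := exists_dual_vector ℂ (T x₀) (norm_ne_zero_iff.mpr hx₀)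
  obtain ⟨ι, Fl, eA, hNe, hb, hconv⟩ := h1
  haveI := hNe
  set δ := ε / (∑ k, ‖f k‖ + 1) with hδdef
  have hfs : (0:ℝ) ≤ ∑ k, ‖f k‖ := Finset.sum_nonneg fun k _ => norm_nonneg _
  have hδ : 0 < δ := div_pos hε (by linarith)
  have key : ∀ k, Filter.Tendsto (fun i => ‖eA i (v k) - v k‖) Fl (𝓝 0) := by
    intro k
    have ha : IsApprox (g.smulRight (v k)) := (isFinRank_smulRight g (v k)).isApprox
    have h2 := (hconv _ ha).1
    rw [tendsto_iff_norm_sub_tendsto_zero] at h2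
    have heq : ∀ i, ‖(eA i).comp (g.smulRight (v k)) - g.smulRight (v k)‖
        = ‖eA i (v k) - v k‖ := by
      intro i
      have he : (eA i).comp (g.smulRight (v k)) - g.smulRight (v k)
          = g.smulRight (eA i (v k) - v k) := by
        ext x
        simp [smul_sub]
      rw [he, ContinuousLinearMap.norm_smulRight_apply, hg1, one_mul]
    simpa only [heq] using h2
  have ev : ∀ᶠ i in Fl, ∀ k, ‖eA i (v k) - v k‖ ≤ δ := by
    rw [Filter.eventually_all]
    intro k
    exact ((key k).eventually_lt_const hδ).mono fun i hi => le_of_lt hi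
  obtain ⟨i, hi⟩ := ev.exists
  refine ⟨eA i, (hb i).1, (hb i).2, ?_⟩
  have heq2 : eA i ∘L T - T = ∑ k, (f k).smulRight (eA i (v k) - v k) := by
    ext x
    have hTx : T x = ∑ k, f k x • v k := by rw [hTd]; simp
    simp [hTx, map_sum, map_smul, smul_sub, Finset.sum_sub_distrib]
  rw [heq2]
  refine (τ.gamma_sum_le Finset.univ _ (fun k _ => isFinRank_smulRight _ _)).trans ?_
  calc ∑ k, τ.gamma X X ((f k).smulRight (eA i (v k) - v k))
      ≤ ∑ k, ‖f k‖ * δ := Finset.sum_le_sum fun k _ =>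
        (τ.gamma_smulRight _ _).trans (mul_le_mul_of_nonneg_left (hi k) (norm_nonneg _))
    _ = (∑ k, ‖f k‖) * δ := by rw [Finset.sum_mul]
    _ ≤ ε := by rw [hδdef]; exact mul_div_add_one_le hfs hε

lemma bai_right (τ : OpIdealNorm.{u}) {lam : ℝ} (h1 : HasBAIof X lam)
    (T : X →L[ℂ] X) (hT : IsFinRank T) {x₀ : X} (hx₀ : T x₀ ≠ 0)
    {ε : ℝ} (hε : 0 < ε) :
    ∃ e : X →L[ℂ] X, IsApprox e ∧ ‖e‖ ≤ lam ∧ τ.gamma X X (T ∘L e - T) ≤ ε := by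
  obtain ⟨n, f, v, hTd⟩ := exists_decomp T hT
  obtain ⟨ι, Fl, eA, hNe, hb, hconv⟩ := h1
  haveI := hNe
  set w : X := T x₀ with hw
  have hwn : (0:ℝ) < ‖w‖ := norm_pos_iff.mpr hx₀
  set δ := ε / (∑ k, ‖v k‖ + 1) with hδdef
  have hvs : (0:ℝ) ≤ ∑ k, ‖v k‖ := Finset.sum_nonneg fun k _ => norm_nonneg _
  have hδ : 0 < δ := div_pos hε (by linarith)
  have key : ∀ k, Filter.Tendsto (fun i => ‖(f k) ∘L eA i - f k‖) Fl (𝓝 0) := by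
    intro k
    have ha : IsApprox ((f k).smulRight w) := (isFinRank_smulRight (f k) w).isApprox
    have h2 := (hconv _ ha).2
    rw [tendsto_iff_norm_sub_tendsto_zero] at h2
    have heq : ∀ i, ‖((f k).smulRight w).comp (eA i) - (f k).smulRight w‖
        = ‖(f k) ∘L eA i - f k‖ * ‖w‖ := by
      intro i
      have he : ((f k).smulRight w).comp (eA i) - (f k).smulRight w
          = ((f k) ∘L eA i - f k).smulRight w := by
        ext x
        simp [sub_smul]
      rw [he, ContinuousLinearMap.norm_smulRight_apply]
    rw [show (fun i => ‖((f k).smulRight w).comp (eA i) - (f k).smulRight w‖)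
        = fun i => ‖(f k) ∘L eA i - f k‖ * ‖w‖ from funext heq] at h2
    have h3 := h2.div_const ‖w‖
    simpa [mul_div_cancel_right₀ _ (ne_of_gt hwn)] using h3
  have ev : ∀ᶠ i in Fl, ∀ k, ‖(f k) ∘L eA i - f k‖ ≤ δ := by
    rw [Filter.eventually_all]
    intro k
    exact ((key k).eventually_lt_const hδ).mono fun i hi => le_of_lt hi
  obtain ⟨i, hi⟩ := ev.exists
  refine ⟨eA i, (hb i).1, (hb i).2, ?_⟩
  have heq2 : T ∘L eA i - T = ∑ k, ((f k) ∘L eA i - f k).smulRight (v k) := by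
    ext x
    have hTx : ∀ y, T y = ∑ k, f k y • v k := fun y => by rw [hTd]; simp
    simp [hTx, sub_smul, Finset.sum_sub_distrib]
  rw [heq2]
  refine (τ.gamma_sum_le Finset.univ _ (fun k _ => isFinRank_smulRight _ _)).trans ?_
  calc ∑ k, τ.gamma X X (((f k) ∘L eA i - f k).smulRight (v k))
      ≤ ∑ k, δ * ‖v k‖ := Finset.sum_le_sum fun k _ =>
        (τ.gamma_smulRight _ _).trans (mul_le_mul_of_nonneg_right (hi k) (norm_nonneg _))
    _ = (∑ k, ‖v k‖) * δ := by rw [← Finset.mul_sum, mul_comm]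
    _ ≤ ε := by rw [hδdef]; exact mul_div_add_one_le hvs hε

end BAI

section Core

variable {X Y : Type u} [NormedAddCommGroup X] [NormedSpace ℂ X]
  [NormedAddCommGroup Y] [NormedSpace ℂ Y]

lemma core_est (γ τ : OpIdealNorm.{u}) {lam β C : ℝ}
    (hC : 0 ≤ C) (hβ : 0 ≤ β)
    (h1 : HasBAIof X lam) (h2 : MulSurjInv Y X β)
    (h3 : (∀ M : Y →L[ℂ] X, IsFinRank M → τ.gamma Y X M ≤ C * γ.gamma Y X M) ∨
          (∀ M : X →L[ℂ] Y, IsFinRank M → τ.gamma X Y M ≤ C * γ.gamma X Y M))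
    (T : X →L[ℂ] X) (hT : IsFinRank T) :
    τ.gamma X X T ≤ C * β * lam * γ.gamma X X T := by
  by_cases hT0 : T = 0
  · simp [hT0, τ.gamma_zero, γ.gamma_zero]
  have hx₀ : ∃ x₀, T x₀ ≠ 0 := by
    by_contra h
    push_neg at h
    exact hT0 (by ext x; simp [h x])
  obtain ⟨x₀, hx₀⟩ := hx₀
  refine le_of_forall_pos_le_add fun ε hε => ?_
  have hγ : 0 ≤ γ.gamma X X T := γ.gamma_nonneg X X T
  have hτ : 0 ≤ τ.gamma X X T := τ.gamma_nonneg X X T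
  set G := γ.gamma X X T with hG
  set ε3 := ε / 3 with hε3def
  have hε3p : 0 < ε3 := by positivity
  set δ := ε3 / (C * G + 1) with hδdef
  have hδ : 0 < δ := div_pos hε3p (by positivity)
  rcases h3 with h3 | h3
  · -- comparison on F(Y,X); approximate T on the right
    obtain ⟨e, heA, heN, heτ⟩ := bai_right τ h1 T hT hx₀ hε3p
    obtain ⟨R, S, hRSa, hsum, htsum, hhs⟩ := h2 e heA δ hδ
    set ε4 := ε3 / (τ.gamma X X T + 1) with hε4def
    have hε4p : 0 < ε4 := by positivity
    have htt : Filter.Tendsto (fun s : Finset ℕ => ∑ i ∈ s, (R i ∘L S i))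
        Filter.atTop (𝓝 e) := hhs
    have hev : ∀ᶠ s in (Filter.atTop : Filter (Finset ℕ)),
        dist (∑ i ∈ s, (R i ∘L S i)) e < ε4 := Metric.tendsto_nhds.mp htt ε4 hε4p
    obtain ⟨s, hs⟩ := hev.exists
    set P : X →L[ℂ] X := ∑ i ∈ s, R i ∘L S i with hPdef
    have hPe : ‖e - P‖ ≤ ε4 := by
      rw [← norm_neg, neg_sub, ← dist_eq_norm]
      exact hs.le
    have hd1 : T = (T - T ∘L e) + T ∘L (e - P) + T ∘L P := by
      rw [ContinuousLinearMap.comp_sub]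
      abel
    have hfr1 : IsFinRank (T - T ∘L e) := hT.sub (hT.comp_right e)
    have hfr2 : IsFinRank (T ∘L (e - P)) := hT.comp_right _
    have hfr3 : IsFinRank (T ∘L P) := hT.comp_right _
    have hstep : τ.gamma X X T ≤ τ.gamma X X (T - T ∘L e)
        + τ.gamma X X (T ∘L (e - P)) + τ.gamma X X (T ∘L P) := by
      calc τ.gamma X X T
          = τ.gamma X X ((T - T ∘L e) + T ∘L (e - P) + T ∘L P) := by rw [← hd1]
        _ ≤ τ.gamma X X ((T - T ∘L e) + T ∘L (e - P)) + τ.gamma X X (T ∘L P) :=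
            τ.gamma_add_le X X _ _ (hfr1.add hfr2) hfr3
        _ ≤ τ.gamma X X (T - T ∘L e) + τ.gamma X X (T ∘L (e - P))
            + τ.gamma X X (T ∘L P) :=
            add_le_add_left (τ.gamma_add_le X X _ _ hfr1 hfr2) _
    have hb1 : τ.gamma X X (T - T ∘L e) ≤ ε3 := by
      rw [show T - T ∘L e = -(T ∘L e - T) from (neg_sub _ _).symm,
        τ.gamma_neg ((hT.comp_right e).sub hT)]
      exact heτ
    have hb2 : τ.gamma X X (T ∘L (e - P)) ≤ ε3 := by
      refine (τ.gamma_comp_right hT _).trans ?_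
      calc τ.gamma X X T * ‖e - P‖ ≤ τ.gamma X X T * ε4 :=
            mul_le_mul_of_nonneg_left hPe hτ
        _ ≤ ε3 := by rw [hε4def]; exact mul_div_add_one_le hτ hε3p
    have hb3 : τ.gamma X X (T ∘L P) ≤ C * β * lam * G + ε3 := by
      have hTP : T ∘L P = ∑ i ∈ s, (T ∘L R i) ∘L S i := by
        ext x
        simp [hPdef, map_sum]
      rw [hTP]
      refine (τ.gamma_sum_le s _
        (fun i _ => (hT.comp_right (R i)).comp_right (S i))).trans ?_
      have hterm : ∀ i ∈ s, τ.gamma X X ((T ∘L R i) ∘L S i)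
          ≤ (C * G) * (‖R i‖ * ‖S i‖) := by
        intro i _
        refine (τ.gamma_comp_right (hT.comp_right (R i)) (S i)).trans ?_
        have h5 : τ.gamma Y X (T ∘L R i) ≤ C * (G * ‖R i‖) :=
          (h3 _ (hT.comp_right (R i))).trans
            (mul_le_mul_of_nonneg_left (γ.gamma_comp_right hT (R i)) hC)
        calc τ.gamma Y X (T ∘L R i) * ‖S i‖ ≤ (C * (G * ‖R i‖)) * ‖S i‖ :=
              mul_le_mul_of_nonneg_right h5 (norm_nonneg _)
          _ = (C * G) * (‖R i‖ * ‖S i‖) := by ring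
      calc ∑ i ∈ s, τ.gamma X X ((T ∘L R i) ∘L S i)
          ≤ ∑ i ∈ s, (C * G) * (‖R i‖ * ‖S i‖) := Finset.sum_le_sum hterm
        _ = (C * G) * ∑ i ∈ s, ‖R i‖ * ‖S i‖ := by rw [Finset.mul_sum]
        _ ≤ (C * G) * (β * lam + δ) := by
            refine mul_le_mul_of_nonneg_left ?_ (by positivity)
            refine ((Summable.sum_le_tsum s (fun i _ =>
              mul_nonneg (norm_nonneg _) (norm_nonneg _)) hsum).trans htsum).trans ?_
            have : β * ‖e‖ ≤ β * lam := mul_le_mul_of_nonneg_left heN hβ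
            linarith
        _ ≤ C * β * lam * G + ε3 := by
            have h6 : (C * G) * δ ≤ ε3 := by
              rw [hδdef]; exact mul_div_add_one_le (by positivity) hε3p
            nlinarith [h6]
    calc τ.gamma X X T ≤ ε3 + ε3 + (C * β * lam * G + ε3) := by
          linarith [hstep, hb1, hb2, hb3]
      _ = C * β * lam * G + ε := by rw [hε3def]; ring
  · -- comparison on F(X,Y); approximate T on the left
    obtain ⟨e, heA, heN, heτ⟩ := bai_left τ h1 T hT hx₀ hε3p
    obtain ⟨R, S, hRSa, hsum, htsum, hhs⟩ := h2 e heA δ hδ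
    set ε4 := ε3 / (τ.gamma X X T + 1) with hε4def
    have hε4p : 0 < ε4 := by positivity
    have htt : Filter.Tendsto (fun s : Finset ℕ => ∑ i ∈ s, (R i ∘L S i))
        Filter.atTop (𝓝 e) := hhs
    have hev : ∀ᶠ s in (Filter.atTop : Filter (Finset ℕ)),
        dist (∑ i ∈ s, (R i ∘L S i)) e < ε4 := Metric.tendsto_nhds.mp htt ε4 hε4p
    obtain ⟨s, hs⟩ := hev.exists
    set P : X →L[ℂ] X := ∑ i ∈ s, R i ∘L S i with hPdef
    have hPe : ‖e - P‖ ≤ ε4 := by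
      rw [← norm_neg, neg_sub, ← dist_eq_norm]
      exact hs.le
    have hd1 : T = (T - e ∘L T) + (e - P) ∘L T + P ∘L T := by
      rw [ContinuousLinearMap.sub_comp]
      abel
    have hfr1 : IsFinRank (T - e ∘L T) := hT.sub (hT.comp_left e)
    have hfr2 : IsFinRank ((e - P) ∘L T) := hT.comp_left _
    have hfr3 : IsFinRank (P ∘L T) := hT.comp_left _
    have hstep : τ.gamma X X T ≤ τ.gamma X X (T - e ∘L T)
        + τ.gamma X X ((e - P) ∘L T) + τ.gamma X X (P ∘L T) := by
      calc τ.gamma X X T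
          = τ.gamma X X ((T - e ∘L T) + (e - P) ∘L T + P ∘L T) := by rw [← hd1]
        _ ≤ τ.gamma X X ((T - e ∘L T) + (e - P) ∘L T) + τ.gamma X X (P ∘L T) :=
            τ.gamma_add_le X X _ _ (hfr1.add hfr2) hfr3
        _ ≤ τ.gamma X X (T - e ∘L T) + τ.gamma X X ((e - P) ∘L T)
            + τ.gamma X X (P ∘L T) :=
            add_le_add_left (τ.gamma_add_le X X _ _ hfr1 hfr2) _
    have hb1 : τ.gamma X X (T - e ∘L T) ≤ ε3 := by
      rw [show T - e ∘L T = -(e ∘L T - T) from (neg_sub _ _).symm,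
        τ.gamma_neg ((hT.comp_left e).sub hT)]
      exact heτ
    have hb2 : τ.gamma X X ((e - P) ∘L T) ≤ ε3 := by
      refine (τ.gamma_comp_left _ hT).trans ?_
      calc ‖e - P‖ * τ.gamma X X T ≤ ε4 * τ.gamma X X T :=
            mul_le_mul_of_nonneg_right hPe hτ
        _ = τ.gamma X X T * ε4 := mul_comm _ _
        _ ≤ ε3 := by rw [hε4def]; exact mul_div_add_one_le hτ hε3p
    have hb3 : τ.gamma X X (P ∘L T) ≤ C * β * lam * G + ε3 := by
      have hTP : P ∘L T = ∑ i ∈ s, R i ∘L (S i ∘L T) := by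
        ext x
        simp [hPdef]
      rw [hTP]
      refine (τ.gamma_sum_le s _
        (fun i _ => (hT.comp_left (S i)).comp_left (R i))).trans ?_
      have hterm : ∀ i ∈ s, τ.gamma X X (R i ∘L (S i ∘L T))
          ≤ (C * G) * (‖R i‖ * ‖S i‖) := by
        intro i _
        refine (τ.gamma_comp_left (R i) (hT.comp_left (S i))).trans ?_
        have h5 : τ.gamma X Y (S i ∘L T) ≤ C * (‖S i‖ * G) :=
          (h3 _ (hT.comp_left (S i))).trans
            (mul_le_mul_of_nonneg_left (γ.gamma_comp_left (S i) hT) hC)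
        calc ‖R i‖ * τ.gamma X Y (S i ∘L T) ≤ ‖R i‖ * (C * (‖S i‖ * G)) :=
              mul_le_mul_of_nonneg_left h5 (norm_nonneg _)
          _ = (C * G) * (‖R i‖ * ‖S i‖) := by ring
      calc ∑ i ∈ s, τ.gamma X X (R i ∘L (S i ∘L T))
          ≤ ∑ i ∈ s, (C * G) * (‖R i‖ * ‖S i‖) := Finset.sum_le_sum hterm
        _ = (C * G) * ∑ i ∈ s, ‖R i‖ * ‖S i‖ := by rw [Finset.mul_sum]
        _ ≤ (C * G) * (β * lam + δ) := by
            refine mul_le_mul_of_nonneg_left ?_ (by positivity)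
            refine ((Summable.sum_le_tsum s (fun i _ =>
              mul_nonneg (norm_nonneg _) (norm_nonneg _)) hsum).trans htsum).trans ?_
            have : β * ‖e‖ ≤ β * lam := mul_le_mul_of_nonneg_left heN hβ
            linarith
        _ ≤ C * β * lam * G + ε3 := by
            have h6 : (C * G) * δ ≤ ε3 := by
              rw [hδdef]; exact mul_div_add_one_le (by positivity) hε3p
            nlinarith [h6]
    calc τ.gamma X X T ≤ ε3 + ε3 + (C * β * lam * G + ε3) := by
          linarith [hstep, hb1, hb2, hb3]
      _ = C * β * lam * G + ε := by rw [hε3def]; ring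

end Core

end AuxLemmas

/-- If `A(X)` has a BAI of bound `λ`, the multiplication
`A(Y,X) ⊗̂ A(X,Y) → A(X)` is onto with inversion constant `β`, and the operator ideal
norms `γ`, `τ` satisfy `cγ ≤ τ ≤ Cγ` on `F(Y,X)` or on `F(X,Y)`, then
`cβ⁻²λ⁻²γ ≤ τ ≤ Cβ²λ²γ` on `F(X)`. -/
theorem stmt7 {X Y : Type u} [NormedAddCommGroup X] [NormedSpace ℂ X] [CompleteSpace X]
    [NormedAddCommGroup Y] [NormedSpace ℂ Y] [CompleteSpace Y]
    (γ τ : OpIdealNorm.{u}) (lam β c C : ℝ)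
    (h1 : HasBAIof X lam)
    (h2 : MulSurjInv Y X β)
    (h3 : (∀ T : Y →L[ℂ] X, IsFinRank T →
            c * γ.gamma Y X T ≤ τ.gamma Y X T ∧ τ.gamma Y X T ≤ C * γ.gamma Y X T) ∨
          (∀ T : X →L[ℂ] Y, IsFinRank T →
            c * γ.gamma X Y T ≤ τ.gamma X Y T ∧ τ.gamma X Y T ≤ C * γ.gamma X Y T)) :
    ∀ T : X →L[ℂ] X, IsFinRank T →
      c * β⁻¹ ^ 2 * lam⁻¹ ^ 2 * γ.gamma X X T ≤ τ.gamma X X T ∧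
      τ.gamma X X T ≤ C * β ^ 2 * lam ^ 2 * γ.gamma X X T := by
  intro T hT
  by_cases hT0 : T = 0
  · constructor
    · simp [hT0, γ.gamma_zero, τ.gamma_zero]
    · simp [hT0, γ.gamma_zero, τ.gamma_zero]
  have hx₀ : ∃ x₀, T x₀ ≠ 0 := by
    by_contra h
    push_neg at h
    exact hT0 (by ext x; simp [h x])
  obtain ⟨x₀, hx₀⟩ := hx₀
  have hTn : 0 < ‖T‖ := norm_pos_iff.mpr hT0
  have hγT : 0 ≤ γ.gamma X X T := γ.gamma_nonneg X X T
  have hτT : 0 ≤ τ.gamma X X T := τ.gamma_nonneg X X T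
  -- the BAI bound is at least 1
  have hlam1 : 1 ≤ lam := by
    obtain ⟨ι, Fl, eA, hNe, hb, hconv⟩ := h1
    haveI := hNe
    have ht := (hconv T hT.isApprox).1
    have hnt : Tendsto (fun i => ‖(eA i).comp T‖) Fl (𝓝 ‖T‖) :=
      (continuous_norm.tendsto _).comp ht
    have hle : ‖T‖ ≤ lam * ‖T‖ := by
      refine le_of_tendsto hnt (Filter.Eventually.of_forall fun i => ?_)
      exact (ContinuousLinearMap.opNorm_comp_le _ _).trans
        (mul_le_mul_of_nonneg_right (hb i).2 (norm_nonneg _))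
    nlinarith
  -- the inversion constant is at least 1
  have hβ1 : 1 ≤ β := by
    have hkey : ∀ ε, 0 < ε → ‖T‖ ≤ β * ‖T‖ + ε := by
      intro ε hε
      obtain ⟨R, S, hRSa, hsum, htsum, hhs⟩ := h2 T hT.isApprox ε hε
      have hsum2 : Summable (fun i => ‖R i ∘L S i‖) :=
        Summable.of_nonneg_of_le (fun i => norm_nonneg _)
          (fun i => ContinuousLinearMap.opNorm_comp_le _ _) hsum
      have h4 : ‖T‖ ≤ ∑' i, ‖R i ∘L S i‖ := by
        rw [← hhs.tsum_eq]
        exact norm_tsum_le_tsum_norm hsum2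
      exact h4.trans ((Summable.tsum_le_tsum
        (fun i => ContinuousLinearMap.opNorm_comp_le _ _) hsum2 hsum).trans htsum)
    have h5 := le_of_forall_pos_le_add hkey
    nlinarith
  have hβ0 : (0:ℝ) < β := lt_of_lt_of_le one_pos hβ1
  have hlam0 : (0:ℝ) < lam := lt_of_lt_of_le one_pos hlam1
  have hbl1 : (1:ℝ) ≤ β * lam := by nlinarith
  -- Y is nontrivial
  have hY : ∃ y₀ : Y, y₀ ≠ 0 := by
    obtain ⟨R, S, hRSa, hsum, htsum, hhs⟩ := h2 T hT.isApprox 1 one_pos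
    by_contra hy
    push_neg at hy
    have hz : ∀ i, R i ∘L S i = 0 := by
      intro i
      ext x
      rw [ContinuousLinearMap.comp_apply, hy (S i x), map_zero]
      rfl
    rw [show (fun i => R i ∘L S i) = fun _ => (0 : X →L[ℂ] X) from funext hz] at hhs
    exact hT0 (hhs.unique hasSum_zero)
  obtain ⟨y₀, hy₀⟩ := hY
  -- C is nonnegative
  have hC0 : 0 ≤ C := by
    rcases h3 with h3 | h3
    · obtain ⟨g, hg1, hgy⟩ := exists_dual_vector ℂ y₀ (norm_ne_zero_iff.mpr hy₀)
      set M : Y →L[ℂ] X := g.smulRight (T x₀) with hMdef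
      have hM : IsFinRank M := isFinRank_smulRight _ _
      have hMne : M ≠ 0 := by
        intro h0
        have h1' : M y₀ = 0 := by rw [h0]; rfl
        rw [hMdef, ContinuousLinearMap.smulRight_apply, hgy] at h1'
        exact smul_ne_zero (by simpa using hy₀) hx₀ h1'
      have hγM : 0 < γ.gamma Y X M :=
        lt_of_le_of_ne (γ.gamma_nonneg _ _ _)
          (fun h => hMne (γ.gamma_def _ _ _ hM h.symm))
      have h6 := (h3 M hM).2
      nlinarith [τ.gamma_nonneg Y X M]
    · obtain ⟨g, hg1, hgy⟩ := exists_dual_vector ℂ (T x₀) (norm_ne_zero_iff.mpr hx₀)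
      set M : X →L[ℂ] Y := g.smulRight y₀ with hMdef
      have hM : IsFinRank M := isFinRank_smulRight _ _
      have hMne : M ≠ 0 := by
        intro h0
        have h1' : M (T x₀) = 0 := by rw [h0]; rfl
        rw [hMdef, ContinuousLinearMap.smulRight_apply, hgy] at h1'
        exact smul_ne_zero (by simpa using hx₀) hy₀ h1'
      have hγM : 0 < γ.gamma X Y M :=
        lt_of_le_of_ne (γ.gamma_nonneg _ _ _)
          (fun h => hMne (γ.gamma_def _ _ _ hM h.symm))
      have h6 := (h3 M hM).2
      nlinarith [τ.gamma_nonneg X Y M]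
  -- upper estimate
  have hupper : τ.gamma X X T ≤ C * β ^ 2 * lam ^ 2 * γ.gamma X X T := by
    have hcore := core_est γ τ hC0 (by linarith : (0:ℝ) ≤ β) h1 h2
      (h3.imp (fun h M hM => (h M hM).2) (fun h M hM => (h M hM).2)) T hT
    have hkey2 : C * β * lam * γ.gamma X X T ≤ C * β ^ 2 * lam ^ 2 * γ.gamma X X T := by
      nlinarith [mul_nonneg (mul_nonneg hC0 hγT)
        (mul_nonneg (le_trans zero_le_one hbl1) (sub_nonneg.mpr hbl1))]
    linarith
  -- lower estimate
  have hlower : c * β⁻¹ ^ 2 * lam⁻¹ ^ 2 * γ.gamma X X T ≤ τ.gamma X X T := by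
    rcases le_or_gt c 0 with hc | hc
    · have h7 : (0:ℝ) ≤ β⁻¹ ^ 2 * lam⁻¹ ^ 2 * γ.gamma X X T := by positivity
      nlinarith
    · have h3' : (∀ M : Y →L[ℂ] X, IsFinRank M →
          γ.gamma Y X M ≤ c⁻¹ * τ.gamma Y X M) ∨
          (∀ M : X →L[ℂ] Y, IsFinRank M →
          γ.gamma X Y M ≤ c⁻¹ * τ.gamma X Y M) := by
        refine h3.imp (fun h M hM => ?_) (fun h M hM => ?_)
        · have h8 := (h M hM).1
          rw [inv_mul_eq_div, le_div_iff₀ hc]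
          linarith
        · have h8 := (h M hM).1
          rw [inv_mul_eq_div, le_div_iff₀ hc]
          linarith
      have hcore := core_est τ γ (le_of_lt (inv_pos.mpr hc))
        (by linarith : (0:ℝ) ≤ β) h1 h2 h3' T hT
      have h9 : c * (c⁻¹ * β * lam * τ.gamma X X T) = β * lam * τ.gamma X X T := by
        field_simp
      have h8 : c * γ.gamma X X T ≤ β * lam * τ.gamma X X T := by
        have h10 := mul_le_mul_of_nonneg_left hcore hc.le
        linarith [h10, h9]
      rw [show c * β⁻¹ ^ 2 * lam⁻¹ ^ 2 * γ.gamma X X T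
          = (c * γ.gamma X X T) / (β ^ 2 * lam ^ 2) from by field_simp]
      rw [div_le_iff₀ (by positivity)]
      nlinarith [h8, mul_nonneg (mul_nonneg hτT (le_trans zero_le_one hbl1))
        (sub_nonneg.mpr hbl1)]
  exact ⟨hlower, hupper⟩

end
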